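/- Let k ≥ 2 and j ≥ k − 1 be integers and n = j·k. Then ∑_{i=1}^{k−1} ((n/k − i/gcd(k,i)) / (k/gcd(k,i))) · C(n,i) < C(n,k). -/

import Mathlib

open Finset

lemma two_choose_le' (n m : ℕ) (h : 3 * m + 2 ≤ n) :
    2 * n.choose m ≤ n.choose (m + 1) := by
  have h1 := Nat.choose_succ_right_eq n m
  have h2 : 2 * (m + 1) ≤ n - m := by omega
  have h3 : 2 * n.choose m * (m+1) ≤ n.choose (m+1) * (m+1) := by
    rw [h1]
    calc 2 * n.choose m * (m+1) = n.choose m * (2*(m+1)) := by ring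
    _ ≤ n.choose m * (n - m) := Nat.mul_le_mul_left _ h2
  exact Nat.le_of_mul_le_mul_right h3 (by omega)

lemma sum_choose_le' (n : ℕ) : ∀ m, 3 * m ≤ n + 1 →
    ∑ i ∈ Icc 1 m, n.choose i ≤ 2 * n.choose m := by
  intro m
  induction m with
  | zero => simp
  | succ m ih =>
    intro h
    rw [Finset.sum_Icc_succ_top (by omega)]
    have h1 := ih (by omega)
    have h2 := two_choose_le' n m (by omega)
    omega

open Finset in
theorem greedy_remainder_nonneg (k j n : ℕ) (hk : 2 ≤ k) (hj : k - 1 ≤ j) (hn : n = j * k) :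
    ∑ i ∈ Icc 1 (k - 1),
        (((n : ℚ) / (k : ℚ) - (i : ℚ) / (Nat.gcd k i : ℚ)) / ((k : ℚ) / (Nat.gcd k i : ℚ)))
          * (Nat.choose n i : ℚ)
      < (Nat.choose n k : ℚ) := by
  have hk0 : 0 < k := by omega
  have hj0 : 0 < j := by omega
  rcases eq_or_lt_of_le hk with hk2 | hk3
  · -- k = 2
    subst hk2
    subst hn
    norm_num [Finset.Icc_self, Nat.cast_choose_two]
    have hjq1 : (1:ℚ) ≤ j := by exact_mod_cast (by omega : 1 ≤ j)
    nlinarith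
  · -- k ≥ 3
    have hk3' : 3 ≤ k := hk3
    have hn2 : k * (k-1) ≤ n := by
      rw [hn]
      calc k * (k-1) = (k-1) * k := by ring
      _ ≤ j * k := Nat.mul_le_mul_right _ hj
    have hkn : k ≤ n := by nlinarith
    have hkq : (0:ℚ) < k := by exact_mod_cast hk0
    have hnq : (n:ℚ) = j * k := by rw [hn]; push_cast; ring
    have hjq : ((k:ℚ)) - 1 ≤ j := by
      have h : ((k-1:ℕ):ℚ) ≤ (j:ℚ) := Nat.cast_le.mpr hj
      rwa [Nat.cast_sub (by omega), Nat.cast_one] at h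
    have hjqpos : (0:ℚ) < j := by exact_mod_cast hj0
    have hgcdtop : Nat.gcd k (k-1) = 1 := by
      have h : Nat.gcd (k-1+1) (k-1) = 1 := by
        simp [Nat.succ_sub_one, Nat.gcd_self_add_left]
      rwa [show k-1+1 = k from by omega] at h
    have hcastk1 : ((k-1:ℕ):ℚ) = (k:ℚ) - 1 := by
      rw [Nat.cast_sub (by omega)]; norm_num
    -- split the sum
    rw [show k - 1 = (k-2) + 1 from by omega, Finset.sum_Icc_succ_top (by omega)]
    rw [show k - 2 + 1 = k - 1 from by omega, hgcdtop]
    set A : ℚ := (n.choose (k-2) : ℚ) with hA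
    set B : ℚ := (n.choose (k-1) : ℚ) with hB
    set C : ℚ := (n.choose k : ℚ) with hC
    have hApos : 0 < A := by
      rw [hA]; exact_mod_cast Nat.choose_pos (by omega : k - 2 ≤ n)
    have hBpos : 0 < B := by
      rw [hB]; exact_mod_cast Nat.choose_pos (by omega : k - 1 ≤ n)
    -- bound each small term's coefficient by j/2
    have hS : ∑ i ∈ Icc 1 (k-2),
        (((n : ℚ) / k - (i : ℚ) / (Nat.gcd k i : ℚ)) / ((k : ℚ) / (Nat.gcd k i : ℚ)))
          * (n.choose i : ℚ) ≤ (j:ℚ)/2 * ∑ i ∈ Icc 1 (k-2), (n.choose i : ℚ) := by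
      rw [Finset.mul_sum]
      apply Finset.sum_le_sum
      intro i hi
      simp only [Finset.mem_Icc] at hi
      have hi1 : 1 ≤ i := hi.1
      have hi2 : i ≤ k - 2 := hi.2
      have hg0 : 0 < Nat.gcd k i := Nat.gcd_pos_of_pos_left _ hk0
      have hgi : Nat.gcd k i ≤ i := Nat.le_of_dvd (by omega) (Nat.gcd_dvd_right _ _)
      obtain ⟨t, ht⟩ := Nat.gcd_dvd_left k i
      have h2g : 2 * Nat.gcd k i ≤ k := by
        have ht0 : t ≠ 0 := by rintro rfl; omega
        have ht1 : t ≠ 1 := by rintro rfl; omega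
        calc 2 * Nat.gcd k i ≤ Nat.gcd k i * t := by
              rw [mul_comm]; exact Nat.mul_le_mul_left _ (by omega)
        _ = k := ht.symm
      have hgq : (0:ℚ) < (Nat.gcd k i : ℚ) := by exact_mod_cast hg0
      have h2gq : 2 * ((Nat.gcd k i : ℕ):ℚ) ≤ k := by exact_mod_cast h2g
      have hiq : (0:ℚ) ≤ i := by positivity
      have hjq0 : (0:ℚ) ≤ j := by positivity
      have heq : ((n : ℚ) / k - (i : ℚ) / (Nat.gcd k i : ℚ)) / ((k : ℚ) / (Nat.gcd k i : ℚ))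
          = ((j:ℚ) * (Nat.gcd k i : ℚ) - i) / k := by
        rw [hnq]; field_simp
      have hkey : ((n : ℚ) / k - (i : ℚ) / (Nat.gcd k i : ℚ)) / ((k : ℚ) / (Nat.gcd k i : ℚ))
          ≤ (j:ℚ)/2 := by
        rw [heq, div_le_div_iff₀ hkq (by norm_num)]
        nlinarith
      exact mul_le_mul_of_nonneg_right hkey (by positivity)
    have hSsum : ∑ i ∈ Icc 1 (k-2), (n.choose i : ℚ) ≤ 2 * A := by
      rw [hA]
      have h32 : 3 * (k-2) ≤ n + 1 := by
        have h1 : 3 * (k-1) ≤ k * (k-1) := Nat.mul_le_mul_right _ hk3'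
        omega
      exact_mod_cast sum_choose_le' n (k-2) h32
    -- choose ratio identities
    have hr1 : C * k = B * ((n:ℚ) - k + 1) := by
      have h := Nat.choose_succ_right_eq n (k-1)
      rw [show k-1+1 = k from by omega] at h
      have hc : ((n - (k-1) : ℕ) : ℚ) = (n:ℚ) - k + 1 := by
        rw [Nat.cast_sub (by omega), hcastk1]; ring
      rw [hC, hB]
      calc (n.choose k : ℚ) * k = ((n.choose k * k : ℕ) : ℚ) := by push_cast; ring
      _ = ((n.choose (k-1) * (n - (k-1)) : ℕ) : ℚ) := by rw [h]
      _ = (n.choose (k-1) : ℚ) * ((n:ℚ) - k + 1) := by rw [Nat.cast_mul, hc]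
    have hr2 : B * ((k:ℚ) - 1) = A * ((n:ℚ) - k + 2) := by
      have h := Nat.choose_succ_right_eq n (k-2)
      rw [show k-2+1 = k-1 from by omega] at h
      have hc : ((n - (k-2) : ℕ) : ℚ) = (n:ℚ) - k + 2 := by
        rw [Nat.cast_sub (by omega),
          show ((k-2:ℕ):ℚ) = (k:ℚ) - 2 by rw [Nat.cast_sub (by omega)]; norm_num]
        ring
      rw [hA, hB]
      calc (n.choose (k-1) : ℚ) * ((k:ℚ)-1) = ((n.choose (k-1) * (k-1) : ℕ) : ℚ) := by
            push_cast [hcastk1]; ring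
      _ = ((n.choose (k-2) * (n - (k-2)) : ℕ) : ℚ) := by rw [h]
      _ = (n.choose (k-2) : ℚ) * ((n:ℚ) - k + 2) := by rw [Nat.cast_mul, hc]
    -- chain the bounds
    have hchain : ∑ i ∈ Icc 1 (k-2),
        (((n : ℚ) / k - (i : ℚ) / (Nat.gcd k i : ℚ)) / ((k : ℚ) / (Nat.gcd k i : ℚ)))
          * (n.choose i : ℚ) ≤ (j:ℚ) * A := by
      calc _ ≤ (j:ℚ)/2 * ∑ i ∈ Icc 1 (k-2), (n.choose i : ℚ) := hS
      _ ≤ (j:ℚ)/2 * (2*A) := mul_le_mul_of_nonneg_left hSsum (by positivity)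
      _ = (j:ℚ) * A := by ring
    have hfinal : (j:ℚ) * A
        + ((n:ℚ)/k - ((k-1:ℕ):ℚ)/((1:ℕ):ℚ)) / ((k:ℚ)/((1:ℕ):ℚ)) * B < C := by
      rw [hcastk1]
      simp only [Nat.cast_one, div_one]
      rw [hnq] at hr1 hr2 ⊢
      have hjk : (j:ℚ)*k/k = j := by field_simp
      rw [hjk, ← sub_pos]
      have hrw : C - ((j:ℚ) * A + ((j:ℚ) - ((k:ℚ)-1))/k * B)
          = (C*k - ((j:ℚ)*k*A + ((j:ℚ)-k+1)*B))/k := by field_simp; ring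
      rw [hrw]
      apply div_pos _ hkq
      have he : C*k - ((j:ℚ)*k*A + ((j:ℚ)-k+1)*B) = (j:ℚ)*A*((j:ℚ)*k - 2*k + 2) := by
        linear_combination hr1 + (j:ℚ)*hr2
      rw [he]
      have hk3q : (3:ℚ) ≤ k := by exact_mod_cast hk3'
      have h2 : (0:ℚ) < (j:ℚ)*k - 2*k + 2 := by
        nlinarith [mul_le_mul_of_nonneg_right hjq hkq.le]
      positivity
    calc _ ≤ (j:ℚ) * A
        + ((n:ℚ)/k - ((k-1:ℕ):ℚ)/((1:ℕ):ℚ)) / ((k:ℚ)/((1:ℕ):ℚ)) * B :=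
          add_le_add hchain le_rfl
    _ < C := hfinal
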